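/- Let Z ∼ N(μ₁, 1) and Z' ∼ N(μ₂, 1) with μ₁ ≤ μ₂. Then for all real c and γ, P(Z ≤ c | Z ≤ γ) ≥ P(Z' ≤ c | Z' ≤ γ). Equivalently, writing Φ for the standard normal CDF and Φ(c; γ) := Φ(c)/Φ(γ) for c ≤ γ and Φ(c; γ) := 1 for c > γ, one has Φ(c + s; γ + s) ≥ Φ(c; γ) for all c, γ ∈ ℝ and all s ≥ 0. -/

import Mathlib

open MeasureTheory ProbabilityTheory

/-- The standard normal CDF `Φ`. -/
noncomputable def stdGaussianCDF (x : ℝ) : ℝ := ((gaussianReal 0 1) (Set.Iic x)).toReal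

/-- The CDF of a standard normal truncated to be no greater than `γ`:
`Φ(c; γ) = Φ(c)/Φ(γ)` for `c ≤ γ` and `Φ(c; γ) = 1` for `c > γ`. -/
noncomputable def truncGaussianCDF (c γ : ℝ) : ℝ :=
  if c ≤ γ then stdGaussianCDF c / stdGaussianCDF γ else 1

namespace TruncAux

open Real Set Filter

/-- The standard normal density. -/
noncomputable def phi (x : ℝ) : ℝ := (Real.sqrt (2 * Real.pi))⁻¹ * Real.exp (-(x ^ 2 / 2))

lemma phi_eq (x : ℝ) : gaussianPDFReal 0 1 x = phi x := by
  simp only [gaussianPDFReal, phi, NNReal.coe_one, mul_one, sub_zero, one_div]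
  norm_num
  exact Or.inl (by ring)

lemma phi_pos (x : ℝ) : 0 < phi x := by
  have h2π : 0 < Real.sqrt (2 * Real.pi) := Real.sqrt_pos.2 (by positivity)
  exact mul_pos (inv_pos.2 h2π) (Real.exp_pos _)

lemma phi_cont : Continuous phi := by
  unfold phi
  fun_prop

lemma integrable_phi : Integrable phi := by
  have := integrable_gaussianPDFReal 0 1
  simpa only [funext phi_eq] using this

lemma integrable_mul_phi : Integrable (fun t : ℝ => t * phi t) := by
  have h := (integrable_mul_exp_neg_mul_sq (b := 1/2) (by norm_num)).const_mul
    ((Real.sqrt (2 * Real.pi))⁻¹)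
  have heq : (fun t : ℝ => t * phi t)
      = fun t : ℝ => (Real.sqrt (2 * Real.pi))⁻¹ * (t * Real.exp (-(1/2) * t ^ 2)) := by
    funext t
    simp only [phi]
    ring_nf
  rw [heq]
  exact h

/-- The standard normal CDF as an integral. -/
noncomputable def Phi (x : ℝ) : ℝ := ∫ t in Iic x, phi t

lemma stdGaussianCDF_eq (x : ℝ) : stdGaussianCDF x = Phi x := by
  rw [stdGaussianCDF, gaussianReal_apply_eq_integral 0 one_ne_zero (Iic x),
    ENNReal.toReal_ofReal]
  · simp only [Phi]
    congr 1
    exact funext phi_eq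
  · exact setIntegral_nonneg measurableSet_Iic fun t _ => gaussianPDFReal_nonneg 0 1 t

lemma Phi_pos (x : ℝ) : 0 < Phi x := by
  rw [Phi]
  refine (setIntegral_pos_iff_support_of_nonneg_ae
    (ae_of_all _ fun t => (phi_pos t).le) integrable_phi.integrableOn).2 ?_
  have hsupp : Function.support phi = univ := by
    ext t; simp [Function.mem_support, (phi_pos t).ne']
  rw [hsupp, univ_inter, Real.volume_Iic]
  simp

lemma hasDerivAt_Phi (x : ℝ) : HasDerivAt Phi (phi x) x := by
  have key : Phi = fun y => (∫ t in (0:ℝ)..y, phi t) + Phi 0 := by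
    funext y
    rw [← intervalIntegral.integral_Iic_sub_Iic integrable_phi.integrableOn integrable_phi.integrableOn]
    simp [Phi]
  rw [key]
  have h : HasDerivAt (fun y => ∫ t in (0:ℝ)..y, phi t) (phi x) x :=
    intervalIntegral.integral_hasDerivAt_right (phi_cont.intervalIntegrable 0 x)
      (phi_cont.stronglyMeasurable.stronglyMeasurableAtFilter) phi_cont.continuousAt
  simpa using h.add_const (Phi 0)

lemma hasDerivAt_phi (x : ℝ) : HasDerivAt phi (-(x * phi x)) x := by
  have h1 : HasDerivAt (fun y : ℝ => -(y ^ 2 / 2)) (-x) x := by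
    have := ((hasDerivAt_pow 2 x).div_const 2).neg
    exact this.congr_deriv (by norm_num)
  have h2 := (h1.exp.const_mul ((Real.sqrt (2 * Real.pi))⁻¹))
  have hval : -(x * phi x) = (Real.sqrt (2 * Real.pi))⁻¹ * (Real.exp (-(x ^ 2 / 2)) * -x) := by
    simp only [phi]; ring
  rw [hval]
  exact h2

lemma tendsto_phi_atBot : Tendsto phi atBot (nhds 0) := by
  have h2 : Tendsto (fun y : ℝ => -(y ^ 2 / 2)) atBot atBot := by
    refine tendsto_atBot_mono' _ ?_ tendsto_id
    filter_upwards [eventually_le_atBot (-2 : ℝ)] with y hy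
    simp only [id_eq]
    nlinarith [sq_nonneg (y + 2)]
  have h3 : Tendsto phi atBot (nhds ((Real.sqrt (2 * Real.pi))⁻¹ * 0)) :=
    (Real.tendsto_exp_atBot.comp h2).const_mul _
  simpa using h3

lemma integral_mul_phi (x : ℝ) : ∫ t in Iic x, t * phi t = -phi x := by
  have h := integral_Iic_of_hasDerivAt_of_tendsto' (a := x)
    (f := fun y => -phi y) (f' := fun t => t * phi t)
    (fun t _ => by have := (hasDerivAt_phi t).neg; simp only [neg_neg] at this; exact this)
    integrable_mul_phi.integrableOn (by simpa using Filter.Tendsto.neg tendsto_phi_atBot)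
  simpa using h

lemma phi_add_mul_Phi_nonneg (x : ℝ) : 0 ≤ phi x + x * Phi x := by
  rcases le_or_gt 0 x with hx | hx
  · exact add_nonneg (phi_pos x).le (mul_nonneg hx (Phi_pos x).le)
  · have hmono : Phi x ≤ x⁻¹ * (-phi x) := by
      have hle : Phi x ≤ ∫ t in Iic x, x⁻¹ * (t * phi t) := by
        refine setIntegral_mono_on integrable_phi.integrableOn
          (integrable_mul_phi.const_mul x⁻¹).integrableOn measurableSet_Iic fun t ht => ?_
        have h1 : 1 ≤ t / x := by
          rw [le_div_iff_of_neg hx]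
          simpa using ht
        have := le_mul_of_one_le_left (phi_pos t).le h1
        calc phi t ≤ t / x * phi t := this
        _ = x⁻¹ * (t * phi t) := by ring
      rwa [integral_const_mul, integral_mul_phi] at hle
    have h2 := mul_le_mul_of_nonpos_left hmono hx.le
    rw [← mul_assoc, mul_inv_cancel₀ hx.ne, one_mul] at h2
    linarith

/-- `phi / Phi` is antitone (the reversed hazard rate of the normal is decreasing). -/
lemma ratio_antitone : Antitone (fun t => phi t / Phi t) := by
  have hderiv : ∀ t : ℝ, HasDerivAt (fun t => phi t / Phi t)
      ((-(t * phi t) * Phi t - phi t * phi t) / Phi t ^ 2) t := fun t =>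
    (hasDerivAt_phi t).div (hasDerivAt_Phi t) (Phi_pos t).ne'
  refine antitone_of_deriv_nonpos (fun t => (hderiv t).differentiableAt) fun t => ?_
  rw [(hderiv t).deriv]
  apply div_nonpos_of_nonpos_of_nonneg _ (sq_nonneg _)
  have h1 := phi_add_mul_Phi_nonneg t
  have h2 := (phi_pos t).le
  nlinarith

lemma cross_ineq {u v : ℝ} (huv : u ≤ v) : phi v * Phi u ≤ phi u * Phi v := by
  have := ratio_antitone huv
  rwa [div_le_div_iff₀ (Phi_pos v) (Phi_pos u)] at this

/-- Key monotonicity: shifting both arguments up increases the truncated CDF ratio. -/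
lemma key (a b : ℝ) (hab : a ≤ b) {s : ℝ} (hs : 0 ≤ s) :
    Phi a / Phi b ≤ Phi (a + s) / Phi (b + s) := by
  set g : ℝ → ℝ := fun x => Phi (a + x) / Phi (b + x) with hg
  have hda : ∀ x : ℝ, HasDerivAt (fun x => Phi (a + x)) (phi (a + x)) x := fun x => by
    have := (hasDerivAt_Phi (a + x)).comp x ((hasDerivAt_id x).const_add a)
    simpa [Function.comp_def] using this
  have hdb : ∀ x : ℝ, HasDerivAt (fun x => Phi (b + x)) (phi (b + x)) x := fun x => by
    have := (hasDerivAt_Phi (b + x)).comp x ((hasDerivAt_id x).const_add b)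
    simpa [Function.comp_def] using this
  have hderiv : ∀ x : ℝ, HasDerivAt g
      ((phi (a + x) * Phi (b + x) - Phi (a + x) * phi (b + x)) / Phi (b + x) ^ 2) x := fun x =>
    (hda x).div (hdb x) (Phi_pos (b + x)).ne'
  have hmono : Monotone g := by
    refine monotone_of_deriv_nonneg (fun x => (hderiv x).differentiableAt) fun x => ?_
    rw [(hderiv x).deriv]
    apply div_nonneg _ (sq_nonneg _)
    have := cross_ineq (show a + x ≤ b + x by linarith)
    linarith
  have := hmono hs
  simpa [hg] using this

end TruncAux

/-- **Truncated normal stochastic dominance.** If `Z ∼ N(μ₁, 1)` and `Z' ∼ N(μ₂, 1)` with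
`μ₁ ≤ μ₂`, then `P(Z ≤ c | Z ≤ γ) ≥ P(Z' ≤ c | Z' ≤ γ)` for all `c, γ`; equivalently,
`Φ(c + s; γ + s) ≥ Φ(c; γ)` for all `c, γ` and all `s ≥ 0`. -/
theorem truncated_normal_stochastic_dominance (μ₁ μ₂ : ℝ) (h : μ₁ ≤ μ₂) :
    (∀ c γ : ℝ,
      ((gaussianReal μ₂ 1) (Set.Iic (min c γ))).toReal
          / ((gaussianReal μ₂ 1) (Set.Iic γ)).toReal
        ≤ ((gaussianReal μ₁ 1) (Set.Iic (min c γ))).toReal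
            / ((gaussianReal μ₁ 1) (Set.Iic γ)).toReal) ∧
    (∀ c γ s : ℝ, 0 ≤ s → truncGaussianCDF c γ ≤ truncGaussianCDF (c + s) (γ + s)) := by
  have hM : ∀ (μ t : ℝ), ((gaussianReal μ 1) (Set.Iic t)).toReal = TruncAux.Phi (t - μ) := by
    intro μ t
    have hmap : (gaussianReal 0 1).map (· + μ) = gaussianReal μ 1 := by
      rw [gaussianReal_map_add_const]; rw [zero_add]
    rw [← hmap, Measure.map_apply (measurable_add_const μ) measurableSet_Iic]
    have hpre : (· + μ) ⁻¹' Set.Iic t = Set.Iic (t - μ) := by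
      ext x; simp [le_sub_iff_add_le]
    rw [hpre, ← TruncAux.stdGaussianCDF_eq, stdGaussianCDF]
  constructor
  · intro c γ
    rw [hM, hM, hM, hM]
    have hkey := TruncAux.key (min c γ - μ₂) (γ - μ₂)
      (by have := min_le_right c γ; linarith) (s := μ₂ - μ₁) (by linarith)
    have e1 : min c γ - μ₂ + (μ₂ - μ₁) = min c γ - μ₁ := by ring
    have e2 : γ - μ₂ + (μ₂ - μ₁) = γ - μ₁ := by ring
    rwa [e1, e2] at hkey
  · intro c γ s hs
    simp only [truncGaussianCDF, TruncAux.stdGaussianCDF_eq]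
    by_cases hcγ : c ≤ γ
    · rw [if_pos hcγ, if_pos (by linarith)]
      exact TruncAux.key c γ hcγ hs
    · rw [if_neg hcγ, if_neg (by intro hcs; exact hcγ (by linarith))]
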